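/- Let μ = (μ₁,…,μ_m) and λ = (λ₁,…,λ_n) be probability vectors, C a convex subset of a real vector space, x₁,…,xₙ ∈ C, φ : C → ℝ convex, and ω₁, ω₂ two weight functions with respect to μ and λ. Then φ(∑_{j=1}^n λⱼxⱼ) ≤ ∫₀¹ φ_{ω₁,ω₂}(t) dt ≤ ∑_{j=1}^n λⱼφ(xⱼ), where φ_{ω₁,ω₂}(t) = ∑_{i=1}^m μᵢ φ(∑_{j=1}^n [(1−t)ω₁(i,j)+tω₂(i,j)]λⱼxⱼ). (The function φ_{ω₁,ω₂} is bounded and convex on [0,1], hence Riemann integrable there.) -/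

import Mathlib

open Finset MeasureTheory

/-- Integral refinement of discrete Jensen's inequality via two weight functions:
`φ(∑ λⱼ xⱼ) ≤ ∫₀¹ φ_{ω₁,ω₂}(t) dt ≤ ∑ λⱼ φ(xⱼ)`. -/
theorem jensen_refinement_two_weights_integral
    {E : Type*} [AddCommGroup E] [Module ℝ E]
    {m n : ℕ} (μ : Fin m → ℝ) (lam : Fin n → ℝ)
    (hμ0 : ∀ i, 0 ≤ μ i) (hμ1 : ∑ i, μ i = 1)
    (hlam0 : ∀ j, 0 ≤ lam j) (hlam1 : ∑ j, lam j = 1)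
    (C : Set E) (x : Fin n → E) (hx : ∀ j, x j ∈ C)
    (φ : E → ℝ) (hφ : ConvexOn ℝ C φ)
    (ω₁ ω₂ : Fin m → Fin n → ℝ)
    (hω₁0 : ∀ i j, 0 ≤ ω₁ i j) (hω₁μ : ∀ j, ∑ i, ω₁ i j * μ i = 1)
    (hω₁lam : ∀ i, ∑ j, ω₁ i j * lam j = 1)
    (hω₂0 : ∀ i j, 0 ≤ ω₂ i j) (hω₂μ : ∀ j, ∑ i, ω₂ i j * μ i = 1)
    (hω₂lam : ∀ i, ∑ j, ω₂ i j * lam j = 1) :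
    φ (∑ j, lam j • x j) ≤
        (∫ t in (0:ℝ)..1,
          ∑ i, μ i * φ (∑ j, (((1 - t) * ω₁ i j + t * ω₂ i j) * lam j) • x j)) ∧
      (∫ t in (0:ℝ)..1,
          ∑ i, μ i * φ (∑ j, (((1 - t) * ω₁ i j + t * ω₂ i j) * lam j) • x j)) ≤
        ∑ j, lam j * φ (x j) := by
  classical
  set w : ℝ → Fin m → Fin n → ℝ := fun t i j => (1 - t) * ω₁ i j + t * ω₂ i j with hw
  set y : ℝ → Fin m → E := fun t i => ∑ j, (w t i j * lam j) • x j with hy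
  set F : ℝ → ℝ := fun t => ∑ i, μ i * φ (y t i) with hFdef
  -- basic facts about the weights for t ∈ [0,1]
  have hw0 : ∀ t ∈ Set.Icc (0:ℝ) 1, ∀ i j, 0 ≤ w t i j := by
    intro t ht i j
    have h1 : (0:ℝ) ≤ 1 - t := by linarith [ht.2]
    exact add_nonneg (mul_nonneg h1 (hω₁0 i j)) (mul_nonneg ht.1 (hω₂0 i j))
  have hwlam : ∀ t i, ∑ j, w t i j * lam j = 1 := by
    intro t i
    have : ∑ j, w t i j * lam j
        = (1 - t) * ∑ j, ω₁ i j * lam j + t * ∑ j, ω₂ i j * lam j := by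
      rw [Finset.mul_sum, Finset.mul_sum, ← Finset.sum_add_distrib]
      refine Finset.sum_congr rfl fun j _ => by ring
    rw [this, hω₁lam i, hω₂lam i]; ring
  have hwμ : ∀ t j, ∑ i, w t i j * μ i = 1 := by
    intro t j
    have : ∑ i, w t i j * μ i
        = (1 - t) * ∑ i, ω₁ i j * μ i + t * ∑ i, ω₂ i j * μ i := by
      rw [Finset.mul_sum, Finset.mul_sum, ← Finset.sum_add_distrib]
      refine Finset.sum_congr rfl fun i _ => by ring
    rw [this, hω₁μ j, hω₂μ j]; ring
  have hyC : ∀ t ∈ Set.Icc (0:ℝ) 1, ∀ i, y t i ∈ C := by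
    intro t ht i
    exact hφ.1.sum_mem (fun j _ => mul_nonneg (hw0 t ht i j) (hlam0 j))
      (hwlam t i) (fun j _ => hx j)
  -- the key pointwise identity : ∑ i, μ i • y t i = ∑ j, lam j • x j
  have hmean : ∀ t, ∑ i, μ i • y t i = ∑ j, lam j • x j := by
    intro t
    have : ∑ i, μ i • y t i = ∑ j, (∑ i, w t i j * μ i * lam j) • x j := by
      simp only [hy, Finset.smul_sum, smul_smul]
      rw [Finset.sum_comm]
      refine Finset.sum_congr rfl fun j _ => ?_
      rw [← Finset.sum_smul]
      congr 1
      refine Finset.sum_congr rfl fun i _ => by ring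
    rw [this]
    refine Finset.sum_congr rfl fun j _ => ?_
    rw [← Finset.sum_mul, hwμ t j, one_mul]
  -- pointwise lower bound
  have hlow : ∀ t ∈ Set.Icc (0:ℝ) 1, φ (∑ j, lam j • x j) ≤ F t := by
    intro t ht
    rw [← hmean t]
    simpa [smul_eq_mul] using
      hφ.map_sum_le (t := Finset.univ) (fun i _ => hμ0 i) hμ1 (fun i _ => hyC t ht i)
  -- pointwise upper bound
  have hupp : ∀ t ∈ Set.Icc (0:ℝ) 1, F t ≤ ∑ j, lam j * φ (x j) := by
    intro t ht
    have h1 : ∀ i, φ (y t i) ≤ ∑ j, w t i j * lam j * φ (x j) := by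
      intro i
      simpa [smul_eq_mul] using
        hφ.map_sum_le (t := Finset.univ)
          (fun j _ => mul_nonneg (hw0 t ht i j) (hlam0 j)) (hwlam t i)
          (fun j _ => hx j)
    calc F t ≤ ∑ i, μ i * ∑ j, w t i j * lam j * φ (x j) := by
          refine Finset.sum_le_sum fun i _ => ?_
          exact mul_le_mul_of_nonneg_left (h1 i) (hμ0 i)
      _ = ∑ j, (∑ i, w t i j * μ i) * (lam j * φ (x j)) := by
          simp only [Finset.mul_sum]
          rw [Finset.sum_comm]
          refine Finset.sum_congr rfl fun j _ => ?_
          rw [Finset.sum_mul]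
          refine Finset.sum_congr rfl fun i _ => by ring
      _ = ∑ j, lam j * φ (x j) := by
          refine Finset.sum_congr rfl fun j _ => ?_
          rw [hwμ t j, one_mul]
  -- F is convex on [0,1]
  have hFconv : ConvexOn ℝ (Set.Icc (0:ℝ) 1) F := by
    refine ⟨convex_Icc 0 1, fun t₁ ht₁ t₂ ht₂ a b ha hb hab => ?_⟩
    have hyaffine : ∀ i, y (a * t₁ + b * t₂) i = a • y t₁ i + b • y t₂ i := by
      intro i
      simp only [hy, Finset.smul_sum, ← Finset.sum_add_distrib, smul_smul]
      refine Finset.sum_congr rfl fun j _ => ?_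
      rw [← add_smul]
      congr 1
      simp only [hw]
      have : 1 - (a * t₁ + b * t₂) = a * (1 - t₁) + b * (1 - t₂) := by
        have := hab; ring_nf; linarith [hab]
      rw [this]; ring
    have hmem : ∀ s ∈ Set.Icc (0:ℝ) 1, ∀ i, y s i ∈ C := hyC
    have key : ∀ i, φ (y (a * t₁ + b * t₂) i) ≤ a * φ (y t₁ i) + b * φ (y t₂ i) := by
      intro i
      rw [hyaffine i]
      simpa [smul_eq_mul] using hφ.2 (hmem t₁ ht₁ i) (hmem t₂ ht₂ i) ha hb hab
    have : F (a * t₁ + b * t₂) ≤ ∑ i, μ i * (a * φ (y t₁ i) + b * φ (y t₂ i)) := by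
      refine Finset.sum_le_sum fun i _ => mul_le_mul_of_nonneg_left (key i) (hμ0 i)
    calc F (a • t₁ + b • t₂) ≤ ∑ i, μ i * (a * φ (y t₁ i) + b * φ (y t₂ i)) := by
          simpa [smul_eq_mul] using this
      _ = a • F t₁ + b • F t₂ := by
          simp only [smul_eq_mul, hFdef, Finset.mul_sum, ← Finset.sum_add_distrib]
          refine Finset.sum_congr rfl fun i _ => by ring
  -- F is interval integrable on [0,1]
  have hFcont : ContinuousOn F (Set.Ioo (0:ℝ) 1) := by
    have := hFconv.continuousOn_interior
    rwa [interior_Icc] at this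
  have hbound : ∃ M : ℝ, ∀ t ∈ Set.Icc (0:ℝ) 1, |F t| ≤ M := by
    refine ⟨max |φ (∑ j, lam j • x j)| |∑ j, lam j * φ (x j)|, fun t ht => ?_⟩
    rw [abs_le]
    constructor
    · have := hlow t ht
      have h2 : -(max |φ (∑ j, lam j • x j)| |∑ j, lam j * φ (x j)|)
          ≤ φ (∑ j, lam j • x j) := by
        have := neg_abs_le (φ (∑ j, lam j • x j))
        have h3 := le_max_left |φ (∑ j, lam j • x j)| |∑ j, lam j * φ (x j)|
        linarith
      linarith
    · have := hupp t ht
      have h3 := le_max_right |φ (∑ j, lam j • x j)| |∑ j, lam j * φ (x j)|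
      have := le_abs_self (∑ j, lam j * φ (x j))
      linarith
  obtain ⟨M, hM⟩ := hbound
  have hFint : IntervalIntegrable F volume 0 1 := by
    rw [intervalIntegrable_iff_integrableOn_Ioo_of_le (by norm_num : (0:ℝ) ≤ 1)]
    refine ⟨hFcont.aestronglyMeasurable measurableSet_Ioo, ?_⟩
    apply MeasureTheory.HasFiniteIntegral.restrict_of_bounded (C := M)
      (by simp : volume (Set.Ioo (0:ℝ) 1) < ⊤)
    filter_upwards [MeasureTheory.ae_restrict_mem measurableSet_Ioo] with t ht
    exact (abs_le.mp (hM t (Set.Ioo_subset_Icc_self ht))).2 |>.trans_eq rfl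
      |> fun h => by simpa [Real.norm_eq_abs] using hM t (Set.Ioo_subset_Icc_self ht)
  constructor
  · have : (∫ t in (0:ℝ)..1, φ (∑ j, lam j • x j)) ≤ ∫ t in (0:ℝ)..1, F t :=
      intervalIntegral.integral_mono_on (by norm_num) (intervalIntegrable_const) hFint hlow
    simpa using this
  · have : (∫ t in (0:ℝ)..1, F t) ≤ ∫ t in (0:ℝ)..1, ∑ j, lam j * φ (x j) :=
      intervalIntegral.integral_mono_on (by norm_num) hFint (intervalIntegrable_const) hupp
    simpa using this
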